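/- Let g = sl(n+1,ℝ), π = Σ_{i<j} E_ij ∧ E_ji, and fix i < j. Then X = E_ij satisfies [X,[X,π]] = 0 in ∧³g. -/

import Mathlib

open ExteriorAlgebra

attribute [local instance 100] LieRing.ofAssociativeRing

private lemma brk' {m : ℕ} (a b c d : Fin m) :
    ⁅(Matrix.single a b 1 : Matrix (Fin m) (Fin m) ℝ),
      (Matrix.single c d 1 : Matrix (Fin m) (Fin m) ℝ)⁆ =
      (if b = c then Matrix.single a d 1 else 0)
        - (if d = a then Matrix.single c b 1 else 0) := by
  rw [Ring.lie_def]
  by_cases h1 : b = c <;> by_cases h2 : d = a <;>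
    simp [Matrix.single_mul_single_same, Matrix.single_mul_single_of_ne, h1, h2, Ne.symm]

section
variable {L : Type*} [AddCommGroup L] [Module ℝ L]

private lemma w0l (v : L) : ιMulti ℝ 2 ![(0:L), v] = 0 :=
  AlternatingMap.map_coord_zero _ 0 rfl

private lemma w0r (u : L) : ιMulti ℝ 2 ![u, (0:L)] = 0 :=
  AlternatingMap.map_coord_zero _ 1 rfl

private lemma wss (a : L) : ιMulti ℝ 2 ![a, -a - a] = 0 := by
  have h : (![a, -a - a] : Fin 2 → L) = Function.update ![a, a] 1 ((-2 : ℝ) • a) := by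
    funext k
    fin_cases k <;> simp [Function.update] <;> module
  have h2 : Function.update ![a, a] 1 a = ![a, a] := by
    funext k; fin_cases k <;> simp [Function.update]
  rw [h, (ιMulti ℝ 2).map_update_smul, h2,
    AlternatingMap.map_eq_zero_of_eq _ ![a,a] (i := 0) (j := 1) rfl (by decide), smul_zero]
end

/-- Auxiliary data packaging the Schouten bracket operations on the exterior algebra
`⋀• g` of a Lie algebra `g`, characterized by their values on decomposable elements:
* `bv X` is the Schouten bracket `[X, ·]` with an element of `g`, i.e. the unique
  derivation of `⋀• g` extending `ad X`;
* `sb` is the Schouten bracket `[·,·] : ⋀² g × ⋀² g → ⋀³ g`;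
* `pair ξ η` is the pairing of `ξ ∧ η ∈ ⋀² g*` with `⋀² g`;
* `sharp η ξ = ι_ξ η` is contraction of `η ∈ ⋀² g` with a covector `ξ`. -/
structure SchoutenData (R : Type*) [Field R] (L : Type*) [LieRing L] [LieAlgebra R L] where
  bv : L →ₗ[R] ExteriorAlgebra R L →ₗ[R] ExteriorAlgebra R L
  sb : ExteriorAlgebra R L →ₗ[R] ExteriorAlgebra R L →ₗ[R] ExteriorAlgebra R L
  pair : Module.Dual R L →ₗ[R] Module.Dual R L →ₗ[R] ExteriorAlgebra R L →ₗ[R] R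
  sharp : ExteriorAlgebra R L →ₗ[R] Module.Dual R L →ₗ[R] L
  bv_wedge2 : ∀ X u v : L, bv X (ιMulti R 2 ![u, v]) =
    ιMulti R 2 ![⁅X, u⁆, v] + ιMulti R 2 ![u, ⁅X, v⁆]
  bv_wedge3 : ∀ X u v t : L, bv X (ιMulti R 3 ![u, v, t]) =
    ιMulti R 3 ![⁅X, u⁆, v, t] + ιMulti R 3 ![u, ⁅X, v⁆, t] + ιMulti R 3 ![u, v, ⁅X, t⁆]
  sb_wedge : ∀ u v x y : L, sb (ιMulti R 2 ![u, v]) (ιMulti R 2 ![x, y]) =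
    ιMulti R 3 ![⁅u, x⁆, v, y] + ιMulti R 3 ![u, ⁅v, x⁆, y]
      - ιMulti R 3 ![x, ⁅u, y⁆, v] - ιMulti R 3 ![x, u, ⁅v, y⁆]
  pair_wedge : ∀ (ξ η : Module.Dual R L) (u v : L),
    pair ξ η (ιMulti R 2 ![u, v]) = ξ u * η v - ξ v * η u
  sharp_wedge : ∀ (u v : L) (ξ : Module.Dual R L),
    sharp (ιMulti R 2 ![u, v]) ξ = ξ u • v - ξ v • u

set_option maxHeartbeats 2000000 in
/-- In `g = sl(n+1,ℝ)` with `π = Σ_{p<q} E_pq ∧ E_qp ∈ ⋀²g`, for fixed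
`i < j` the element `X = E_ij` satisfies `[X,[X,π]] = 0`. -/
theorem bracket_Eij_bracket_Eij_pi_eq_zero (n : ℕ)
    (S : SchoutenData ℝ (Matrix (Fin (n + 1)) (Fin (n + 1)) ℝ))
    (i j : Fin (n + 1)) (hij : i < j) :
    letI E : Fin (n + 1) → Fin (n + 1) → Matrix (Fin (n + 1)) (Fin (n + 1)) ℝ :=
      fun p q => Matrix.single p q 1
    S.bv (E i j)
        (S.bv (E i j)
          (∑ p : Fin (n + 1), ∑ q : Fin (n + 1),
            if p < q then ιMulti ℝ 2 ![E p q, E q p] else 0)) = 0 := by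
  beta_reduce
  have hji : ¬ (j = i) := hij.ne'
  have key : ∀ p q : Fin (n + 1), p < q →
      S.bv (Matrix.single i j 1)
        (S.bv (Matrix.single i j 1)
          (ιMulti ℝ 2 ![Matrix.single p q 1, Matrix.single q p 1])) = 0 := by
    intro p q hpq
    have hA := brk' (m := n + 1) i j p q
    have hB := brk' (m := n + 1) i j q p
    rw [S.bv_wedge2, hA, hB]
    by_cases hjp : j = p
    · have hqi : ¬ (q = i) := (hij.trans (hjp ▸ hpq)).ne'
      have hjq : ¬ (j = q) := (hjp ▸ hpq).ne
      have hpi : ¬ (p = i) := hjp ▸ hij.ne'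
      rw [if_pos hjp, if_neg hqi, if_neg hjq, if_neg hpi, sub_zero, sub_zero, w0r, add_zero,
        S.bv_wedge2, brk', brk', if_neg hji, if_neg hqi, if_neg hjq, if_neg hpi]
      simp [w0l, w0r]
    · by_cases hqi : q = i
      · have hpi : ¬ (p = i) := (hqi ▸ hpq).ne
        have hjq : ¬ (j = q) := fun h => hji (h.trans hqi)
        rw [if_neg hjp, if_pos hqi, if_neg hjq, if_neg hpi, zero_sub, sub_zero, w0r, add_zero,
          S.bv_wedge2, lie_neg, brk', brk', if_neg hjp, if_neg hji, if_neg hjq, if_neg hpi]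
        simp [w0l, w0r]
      · by_cases hpi : p = i
        · by_cases hjq : j = q
          · -- p = i, q = j
            subst hpi; subst hjq
            have hc : ⁅(Matrix.single p j 1 : Matrix (Fin (n+1)) (Fin (n+1)) ℝ),
                ((Matrix.single p p 1 : Matrix (Fin (n+1)) (Fin (n+1)) ℝ)
                  - (Matrix.single j j 1 : Matrix (Fin (n+1)) (Fin (n+1)) ℝ))⁆ =
                (-(Matrix.single p j 1 : Matrix (Fin (n+1)) (Fin (n+1)) ℝ)
                  - (Matrix.single p j 1 : Matrix (Fin (n+1)) (Fin (n+1)) ℝ)) := by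
              rw [lie_sub, brk', brk']
              simp only [hjp, if_false, ite_false, ite_true, if_true, eq_self_iff_true]
              abel
            rw [if_neg hjp, sub_self, w0l, zero_add, if_pos rfl, if_pos rfl, S.bv_wedge2, hA,
              if_neg hjp, sub_self, w0l, zero_add, hc]
            exact wss _
          · -- p = i, q ≠ j
            rw [if_neg hjp, if_neg hqi, if_neg hjq, if_pos hpi, sub_self, zero_sub, w0l,
              zero_add, S.bv_wedge2, lie_neg, brk', brk',
              if_neg hjp, if_neg hqi, if_neg hjq, if_neg hji]
            simp [w0l, w0r]
        · by_cases hjq : j = q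
          · -- q = j, p ≠ i
            rw [if_neg hjp, if_neg hqi, if_pos hjq, if_neg hpi, sub_self, sub_zero, w0l,
              zero_add, S.bv_wedge2, brk', brk',
              if_neg hjp, if_neg hqi, if_neg hji, if_neg hpi]
            simp [w0l, w0r]
          · -- generic
            rw [if_neg hjp, if_neg hqi, if_neg hjq, if_neg hpi, sub_self, w0l, w0r]
            simp
  simp only [map_sum]
  refine Finset.sum_eq_zero fun p _ => Finset.sum_eq_zero fun q _ => ?_
  by_cases h : p < q
  · rw [if_pos h]
    exact key p q h
  · rw [if_neg h, map_zero, map_zero]
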